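/- Consider a feasible instance of the BMILP, i.e., F ≠ ∅, and let v* = inf{c·x + e·z : (x,z) ∈ F}, which is finite by the boundedness assumptions. Let Δ be the maximum of 1 and the maximum absolute value of the determinant of a square submatrix of the (h+m)×d real matrix obtained by stacking D above B. Then v* is a rational number whose denominator is bounded by Δ: there exist integers a and q with 1 ≤ q ≤ Δ such that v* = a/q. -/

import Mathlib

open Matrix Bornology


noncomputable def castv {d : ℕ} (v : Fin d → ℤ) : Fin d → ℝ := fun j => (v j : ℝ)

lemma castv_dot_castv {n : ℕ} (v w : Fin n → ℤ) :
    castv v ⬝ᵥ castv w = ((v ⬝ᵥ w : ℤ) : ℝ) := by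
  simp only [castv, dotProduct]
  push_cast
  rfl

lemma map_mulVec_castv {a b : ℕ} (M : Matrix (Fin a) (Fin b) ℤ) (v : Fin b → ℤ) :
    (M.map ((↑) : ℤ → ℝ)).mulVec (castv v) = castv (M.mulVec v) := by
  funext i
  simp only [Matrix.mulVec, castv, dotProduct, Matrix.map_apply]
  push_cast
  rfl

lemma row_dot {a b : ℕ} (M : Matrix (Fin a) (Fin b) ℤ) (z : Fin b → ℝ) (i : Fin a) :
    ((M.map ((↑) : ℤ → ℝ)).mulVec z) i = castv (M i) ⬝ᵥ z := rfl

lemma castv_neg_dot {n : ℕ} (v : Fin n → ℤ) (z : Fin n → ℝ) :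
    castv (-v) ⬝ᵥ z = -(castv v ⬝ᵥ z) := by
  simp [castv, dotProduct, Finset.sum_neg_distrib]

lemma castv_single_dot {n : ℕ} (j : Fin n) (z : Fin n → ℝ) :
    castv (-(Pi.single j 1)) ⬝ᵥ z = -(z j) := by
  simp [castv, dotProduct, Pi.single_apply]

lemma castv_le_castv {n : ℕ} (v w : Fin n → ℤ) : castv v ≤ castv w ↔ v ≤ w := by
  constructor <;> intro hle i <;> have := hle i <;> simp only [castv] at * <;> exact_mod_cast this


lemma single_eq_ite {k : ℕ} (x : Fin k) :
    (fun j => if x = j then (1:ℝ) else 0) = Pi.single x 1 := by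
  ext j; simp [Pi.single_apply, eq_comm]

lemma exists_perp {k : ℕ} (Ss : Set (Fin k → ℝ)) (hS : Submodule.span ℝ Ss ≠ ⊤) :
    ∃ v : Fin k → ℝ, v ≠ 0 ∧ ∀ s ∈ Ss, s ⬝ᵥ v = 0 := by
  obtain ⟨f, hf0, hf⟩ := (Submodule.span ℝ Ss).exists_dual_map_eq_bot_of_lt_top
    (lt_top_iff_ne_top.2 hS) inferInstance
  refine ⟨fun i => f (Pi.single i 1), ?_, ?_⟩
  · intro hv
    apply hf0
    apply LinearMap.ext
    intro x
    rw [LinearMap.pi_apply_eq_sum_univ f x]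
    simp only [LinearMap.zero_apply]
    refine Finset.sum_eq_zero fun i _ => ?_
    have h0 : f (Pi.single i 1) = 0 := congrFun hv i
    rw [single_eq_ite i]
    simp [h0]
  · intro s hs
    have hfs : f s = 0 := by
      have : f s ∈ Submodule.map f (Submodule.span ℝ Ss) :=
        ⟨s, Submodule.subset_span hs, rfl⟩
      rw [hf] at this
      simpa using this
    rw [dotProduct]
    rw [LinearMap.pi_apply_eq_sum_univ f s] at hfs
    simp only [single_eq_ite] at hfs
    simpa [smul_eq_mul] using hfs



lemma lp_basic {ι : Type} [Fintype ι] {dd : ℕ} (r : ι → Fin dd → ℝ) (b : ι → ℝ) (e : Fin dd → ℝ)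
    (hne : {z : Fin dd → ℝ | ∀ i, r i ⬝ᵥ z ≤ b i}.Nonempty)
    (hbdd : Bornology.IsBounded {z : Fin dd → ℝ | ∀ i, r i ⬝ᵥ z ≤ b i}) :
    ∃ z : Fin dd → ℝ, (∀ i, r i ⬝ᵥ z ≤ b i) ∧
      (∀ y, (∀ i, r i ⬝ᵥ y ≤ b i) → e ⬝ᵥ z ≤ e ⬝ᵥ y) ∧
      (∀ v : Fin dd → ℝ, (∀ i, r i ⬝ᵥ z = b i → r i ⬝ᵥ v = 0) → v = 0) := by
  classical
  set S := {z : Fin dd → ℝ | ∀ i, r i ⬝ᵥ z ≤ b i} with hSdef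
  have hcont : ∀ w : Fin dd → ℝ, Continuous fun z : Fin dd → ℝ => w ⬝ᵥ z := by
    intro w
    simp only [dotProduct]
    exact continuous_finset_sum _ fun i _ => continuous_const.mul (continuous_apply i)
  have hclosed : IsClosed S := by
    have hS : S = ⋂ i, {z : Fin dd → ℝ | r i ⬝ᵥ z ≤ b i} := by
      ext z; simp [hSdef, Set.mem_iInter]
    rw [hS]
    exact isClosed_iInter fun i => isClosed_le (hcont _) continuous_const
  have hcompact : IsCompact S := Metric.isCompact_of_isClosed_isBounded hclosed hbdd
  obtain ⟨z₀, hz₀S, hz₀min⟩ := hcompact.exists_isMinOn hne (hcont e).continuousOn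
  set MM := {z | z ∈ S ∧ ∀ y ∈ S, e ⬝ᵥ z ≤ e ⬝ᵥ y} with hMM
  have hz₀MM : z₀ ∈ MM := ⟨hz₀S, fun y hy => hz₀min hy⟩
  set tc : (Fin dd → ℝ) → ℕ :=
    fun z => (Finset.univ.filter fun i => r i ⬝ᵥ z = b i).card with htc
  set NS : Set ℕ := tc '' MM with hNS
  have hNSne : NS.Nonempty := ⟨tc z₀, z₀, hz₀MM, rfl⟩
  have hNSbdd : BddAbove NS := by
    refine ⟨Fintype.card ι, ?_⟩
    rintro k ⟨y, _, rfl⟩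
    exact le_trans (Finset.card_filter_le _ _) (by simp)
  have hsupmem := Nat.sSup_mem hNSne hNSbdd
  obtain ⟨z, hzMM, hzc⟩ := hsupmem
  have hzmax : ∀ y ∈ MM, tc y ≤ tc z := by
    intro y hy
    rw [hzc]
    exact le_csSup hNSbdd ⟨y, hy, rfl⟩
  refine ⟨z, hzMM.1, fun y hy => hzMM.2 y hy, ?_⟩
  intro v hv
  by_contra hv0
  have hdot : ∀ (w : Fin dd → ℝ) (i : ι) (t : ℝ),
      r i ⬝ᵥ (z + t • w) = r i ⬝ᵥ z + t * (r i ⬝ᵥ w) := by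
    intro w i t
    rw [dotProduct_add, dotProduct_smul, smul_eq_mul]
  have step : ∀ w : Fin dd → ℝ, w ≠ 0 → (∀ i, r i ⬝ᵥ z = b i → r i ⬝ᵥ w = 0) →
      ∃ t : ℝ, 0 < t ∧ (z + t • w ∈ S) ∧
        ∃ i₀, ¬ (r i₀ ⬝ᵥ z = b i₀) ∧ r i₀ ⬝ᵥ (z + t • w) = b i₀ := by
    intro w hw0 hwperp
    set Ip := Finset.univ.filter (fun i => 0 < r i ⬝ᵥ w) with hIp
    have hIpne : Ip.Nonempty := by
      by_contra hemp
      rw [Finset.not_nonempty_iff_eq_empty] at hemp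
      have hle : ∀ i, r i ⬝ᵥ w ≤ 0 := by
        intro i
        by_contra hpos
        push_neg at hpos
        have : i ∈ Ip := by simp [hIp, hpos]
        simp [hemp] at this
      have hall : ∀ t : ℝ, 0 ≤ t → z + t • w ∈ S := by
        intro t ht i
        rw [hdot]
        have : t * (r i ⬝ᵥ w) ≤ 0 := mul_nonpos_of_nonneg_of_nonpos ht (hle i)
        have hzi : r i ⬝ᵥ z ≤ b i := hzMM.1 i
        linarith
      obtain ⟨R, hR⟩ := isBounded_iff_forall_norm_le.1 hbdd
      have hwpos : 0 < ‖w‖ := norm_pos_iff.2 hw0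
      set t := (R + ‖z‖ + 1) / ‖w‖ with htdef
      have hts : 0 ≤ t := by
        apply div_nonneg _ hwpos.le
        have h0 : 0 ≤ ‖z‖ := norm_nonneg _
        have hR0 : 0 ≤ R := le_trans h0 (hR z hzMM.1)
        linarith
      have hmem := hall t hts
      have hnorm : ‖z + t • w‖ ≤ R := hR _ hmem
      have : t * ‖w‖ = ‖t • w‖ := by
        rw [norm_smul, Real.norm_eq_abs, abs_of_nonneg hts]
      have h1 : t * ‖w‖ ≤ ‖z + t • w‖ + ‖z‖ := by
        rw [this]
        calc ‖t • w‖ = ‖(z + t • w) - z‖ := by ring_nf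
          _ ≤ ‖z + t • w‖ + ‖z‖ := norm_sub_le _ _
      have ht2 : t * ‖w‖ = R + ‖z‖ + 1 := by
        rw [htdef, div_mul_cancel₀]
        exact ne_of_gt hwpos
      linarith
    obtain ⟨i₀, hi₀mem, hi₀min⟩ :=
      Finset.exists_min_image Ip (fun i => (b i - r i ⬝ᵥ z) / (r i ⬝ᵥ w)) hIpne
    have hi₀pos : 0 < r i₀ ⬝ᵥ w := by
      have := hi₀mem
      simp [hIp] at this
      exact this
    have hi₀nt : ¬ (r i₀ ⬝ᵥ z = b i₀) := by
      intro hteq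
      have := hwperp i₀ hteq
      rw [this] at hi₀pos
      exact lt_irrefl 0 hi₀pos
    set t := (b i₀ - r i₀ ⬝ᵥ z) / (r i₀ ⬝ᵥ w) with htdef
    have htpos : 0 < t := by
      apply div_pos _ hi₀pos
      have : r i₀ ⬝ᵥ z ≤ b i₀ := hzMM.1 i₀
      rcases lt_or_eq_of_le this with hlt | heq
      · linarith
      · exact absurd heq hi₀nt
    refine ⟨t, htpos, ?_, i₀, hi₀nt, ?_⟩
    · intro i
      rw [hdot]
      rcases le_or_gt (r i ⬝ᵥ w) 0 with hle | hpos
      · have : t * (r i ⬝ᵥ w) ≤ 0 := mul_nonpos_of_nonneg_of_nonpos htpos.le hle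
        have hzi : r i ⬝ᵥ z ≤ b i := hzMM.1 i
        linarith
      · have hiIp : i ∈ Ip := by simp [hIp, hpos]
        have h2 : t ≤ (b i - r i ⬝ᵥ z) / (r i ⬝ᵥ w) := hi₀min i hiIp
        have h3 : t * (r i ⬝ᵥ w) ≤ b i - r i ⬝ᵥ z := by
          rw [← le_div_iff₀ hpos]
          exact h2
        linarith
    · rw [hdot, htdef, div_mul_cancel₀]
      · ring
      · exact ne_of_gt hi₀pos
  have hev : e ⬝ᵥ v = 0 := by
    rcases lt_trichotomy (e ⬝ᵥ v) 0 with hlt | heq | hgt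
    · obtain ⟨t, htpos, hmem, _⟩ := step v hv0 hv
      have := hzMM.2 _ hmem
      rw [dotProduct_add, dotProduct_smul, smul_eq_mul] at this
      nlinarith
    · exact heq
    · have hv0' : -v ≠ 0 := by simpa using hv0
      have hperp' : ∀ i, r i ⬝ᵥ z = b i → r i ⬝ᵥ (-v) = 0 := by
        intro i hi; rw [dotProduct_neg, hv i hi, neg_zero]
      obtain ⟨t, htpos, hmem, _⟩ := step (-v) hv0' hperp'
      have := hzMM.2 _ hmem
      rw [dotProduct_add, dotProduct_smul, smul_eq_mul, dotProduct_neg] at this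
      nlinarith
  obtain ⟨t, htpos, hmem, i₀, hi₀nt, hi₀t⟩ := step v hv0 hv
  have hz'MM : z + t • v ∈ MM := by
    refine ⟨hmem, fun y hy => ?_⟩
    rw [dotProduct_add, dotProduct_smul, smul_eq_mul, hev, mul_zero, add_zero]
    exact hzMM.2 y hy
  have hsub : (Finset.univ.filter fun i => r i ⬝ᵥ z = b i) ⊂
      (Finset.univ.filter fun i => r i ⬝ᵥ (z + t • v) = b i) := by
    constructor
    · intro i hi
      simp only [Finset.mem_filter, Finset.mem_univ, true_and] at hi ⊢
      rw [hdot, hv i hi, mul_zero, add_zero]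
      exact hi
    · intro hcon
      have : i₀ ∈ Finset.univ.filter fun i => r i ⬝ᵥ z = b i :=
        hcon (by simp only [Finset.mem_filter, Finset.mem_univ, true_and]; exact hi₀t)
      simp only [Finset.mem_filter, Finset.mem_univ, true_and] at this
      exact hi₀nt this
  have := Finset.card_lt_card hsub
  have hle : (Finset.univ.filter fun i => r i ⬝ᵥ (z + t • v) = b i).card ≤
      (Finset.univ.filter fun i => r i ⬝ᵥ z = b i).card := hzmax _ hz'MM
  omega


lemma exists_basis_rows {ι : Type} {k : ℕ} (g : ι → Fin k → ℝ)
    (hspan : Submodule.span ℝ (Set.range g) = ⊤) :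
    ∃ τ : Fin k → ι, Function.Injective τ ∧
      (Matrix.of fun a b => g (τ a) b).det ≠ 0 := by
  classical
  obtain ⟨s, hs_sub, hs_span, hs_li⟩ := exists_linearIndependent ℝ (Set.range g)
  rw [hspan] at hs_span
  have hfin : s.Finite := hs_li.setFinite
  have : Fintype s := hfin.fintype
  have hbasis : Module.Basis s ℝ (Fin k → ℝ) := Module.Basis.mk hs_li (by rw [Subtype.range_coe, hs_span])
  have hcard : Fintype.card s = k := by
    have h1 := Module.finrank_eq_card_basis hbasis
    rw [Module.finrank_fintype_fun_eq_card] at h1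
    simp at h1
    rw [← Nat.card_coe_set_eq, Nat.card_eq_fintype_card] at h1
    exact h1.symm
  have e : Fin k ≃ s := (Fintype.equivFinOfCardEq hcard).symm
  have hex : ∀ a : Fin k, ∃ i : ι, g i = (e a : Fin k → ℝ) := fun a => hs_sub (e a).2
  set τ : Fin k → ι := fun a => (hex a).choose with hτ
  have hτs : ∀ a, g (τ a) = (e a : Fin k → ℝ) := fun a => (hex a).choose_spec
  refine ⟨τ, ?_, ?_⟩
  · intro a a' haa
    have : (e a : Fin k → ℝ) = (e a' : Fin k → ℝ) := by rw [← hτs, ← hτs, haa]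
    exact e.injective (Subtype.ext this)
  · have hli : LinearIndependent ℝ (fun a : Fin k => g (τ a)) := by
      have : (fun a : Fin k => g (τ a)) = (fun x : s => (x : Fin k → ℝ)) ∘ e := by
        funext a; simp [hτs a]
      rw [this]
      exact hs_li.comp e e.injective
    have hrows : LinearIndependent ℝ
        (fun a => (Matrix.of fun a b => g (τ a) b) a) := by
      convert hli
      rfl
    have := Matrix.linearIndependent_rows_iff_isUnit.1 hrows
    have hdet := Matrix.isUnit_iff_isUnit_det _ |>.1 this
    exact IsUnit.ne_zero hdet

lemma value_rational {hh mm d : ℕ} {κ : Type} [Fintype κ]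
    (St : Matrix (Fin hh ⊕ Fin mm) (Fin d) ℤ)
    (sgn : κ → ℤ) (hsgn : ∀ t, sgn t = 1 ∨ sgn t = -1)
    (ρ : κ → Fin hh ⊕ Fin mm)
    (r₀ : κ ⊕ Fin d → Fin d → ℤ) (b₀ : κ ⊕ Fin d → ℤ)
    (hrow_mat : ∀ t : κ, r₀ (Sum.inl t) = fun j => sgn t * St (ρ t) j)
    (hrow_unit : ∀ j : Fin d, r₀ (Sum.inr j) = -(Pi.single j 1))
    (hb_unit : ∀ j, b₀ (Sum.inr j) = 0)
    (e : Fin d → ℤ) (z : Fin d → ℝ)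
    (hztight : ∀ v : Fin d → ℝ,
      (∀ i, castv (r₀ i) ⬝ᵥ z = (b₀ i : ℝ) → castv (r₀ i) ⬝ᵥ v = 0) → v = 0)
    (hρinj : ∀ t t' : κ, castv (r₀ (Sum.inl t)) ⬝ᵥ z = (b₀ (Sum.inl t) : ℝ) →
      castv (r₀ (Sum.inl t')) ⬝ᵥ z = (b₀ (Sum.inl t') : ℝ) → ρ t = ρ t' → t = t')
    (Δ : ℝ)
    (hΔ : ∀ (k : ℕ) (ρ' : Fin k → Fin hh ⊕ Fin mm) (σ : Fin k → Fin d),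
      Function.Injective ρ' → Function.Injective σ →
      |(((St.map ((↑) : ℤ → ℝ)).submatrix ρ' σ).det)| ≤ Δ) :
    ∃ a q : ℤ, 1 ≤ q ∧ (q : ℝ) ≤ Δ ∧ castv e ⬝ᵥ z = (a : ℝ) / (q : ℝ) := by
  classical
  set K : Finset (Fin d) := Finset.univ.filter (fun j => z j ≠ 0) with hK
  set k : ℕ := K.card with hk
  set κmap : Fin k → Fin d := ⇑(K.orderEmbOfFin rfl) with hκmap
  have hκmap_mem : ∀ a, κmap a ∈ K := fun a => K.orderEmbOfFin_mem rfl a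
  have hκmap_inj : Function.Injective κmap := (K.orderEmbOfFin rfl).injective
  have hKmem : ∀ j, j ∈ K ↔ z j ≠ 0 := by intro j; simp [hK]
  have hzK : ∀ j, j ∉ K → z j = 0 := by
    intro j hj; by_contra hne; exact hj ((hKmem j).2 hne)
  have himage : Finset.image κmap Finset.univ = K := by
    apply Finset.coe_injective
    rw [Finset.coe_image, Finset.coe_univ, Set.image_univ]
    exact K.range_orderEmbOfFin rfl
  -- unit row dot products
  have hunit_dot : ∀ (j : Fin d) (y : Fin d → ℝ), castv (r₀ (Sum.inr j)) ⬝ᵥ y = -(y j) := by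
    intro j y
    rw [hrow_unit]
    simp [castv, dotProduct, Pi.single_apply]
  -- dot products via the support
  have hdot_support : ∀ (w : Fin d → ℤ) (v : Fin d → ℝ), (∀ j, j ∉ K → v j = 0) →
      castv w ⬝ᵥ v = ∑ a : Fin k, (w (κmap a) : ℝ) * v (κmap a) := by
    intro w v hv
    rw [dotProduct]
    rw [← Finset.sum_subset (Finset.subset_univ K)
      (fun j _ hj => by rw [hv j hj, mul_zero])]
    rw [← himage, Finset.sum_image (fun a _ a' _ haa => hκmap_inj haa)]
    rfl
  -- the tight matrix rows, restricted to the support, span everything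
  set g : {t : κ // castv (r₀ (Sum.inl t)) ⬝ᵥ z = (b₀ (Sum.inl t) : ℝ)} → Fin k → ℝ :=
    fun t b => (r₀ (Sum.inl t.1) (κmap b) : ℝ) with hg
  have hspan : Submodule.span ℝ (Set.range g) = ⊤ := by
    by_contra hne
    obtain ⟨y, hy0, hyperp⟩ := exists_perp _ hne
    set v : Fin d → ℝ :=
      fun j => if hj : j ∈ K then y ((K.orderIsoOfFin rfl).symm ⟨j, hj⟩) else 0 with hv
    have hvK : ∀ j, j ∉ K → v j = 0 := by intro j hj; simp [hv, dif_neg hj]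
    have hvκ : ∀ a, v (κmap a) = y a := by
      intro a
      have h1 : κmap a ∈ K := hκmap_mem a
      have h2 : ((K.orderIsoOfFin rfl).symm ⟨κmap a, h1⟩) = a := by
        apply (K.orderIsoOfFin rfl).injective
        simp only [OrderIso.apply_symm_apply]
        apply Subtype.ext
        rw [K.coe_orderIsoOfFin_apply rfl a]
      simp [hv, dif_pos h1, h2]
    have hv0 : v ≠ 0 := by
      obtain ⟨a, ha⟩ := Function.ne_iff.1 hy0
      intro hcon
      apply ha
      rw [← hvκ a, hcon]
      rfl
    apply hv0
    apply hztight v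
    intro i hi
    rcases i with t | j
    · rw [hdot_support _ _ hvK]
      have : ∑ a : Fin k, (r₀ (Sum.inl t) (κmap a) : ℝ) * v (κmap a) = g ⟨t, hi⟩ ⬝ᵥ y := by
        rw [dotProduct]
        refine Finset.sum_congr rfl fun a _ => ?_
        rw [hvκ a, hg]
      rw [this]
      exact hyperp _ ⟨⟨t, hi⟩, rfl⟩
    · rw [hunit_dot]
      have hzj : z j = 0 := by
        have := hi
        rw [hunit_dot, hb_unit] at this
        simpa using this
      have : j ∉ K := by rw [hKmem]; simpa using hzj
      rw [hvK j this, neg_zero]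
  obtain ⟨τ, hτinj, hτdet⟩ := exists_basis_rows g hspan
  set L : Matrix (Fin k) (Fin k) ℝ := Matrix.of fun a b => g (τ a) b with hL
  set L₀ : Matrix (Fin k) (Fin k) ℤ :=
    Matrix.of (fun a b => r₀ (Sum.inl (τ a).1) (κmap b)) with hL₀
  have hLmap : L = L₀.map ((↑) : ℤ → ℝ) := by
    ext a b; rfl
  have hdetL : L.det = ((L₀.det : ℤ) : ℝ) := by
    rw [hLmap,
      show L₀.map ((↑) : ℤ → ℝ) = (Int.castRingHom ℝ).mapMatrix L₀ from rfl,
      ← RingHom.map_det]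
    rfl
  have hdetL₀ : L₀.det ≠ 0 := by
    intro hcon
    apply hτdet
    rw [hdetL, hcon, Int.cast_zero]
  -- determinant bound
  set M' : Matrix (Fin k) (Fin k) ℤ := St.submatrix (fun a => ρ (τ a).1) κmap with hM'
  have hL₀M' : L₀ = Matrix.of fun a b => (sgn ((τ a).1)) * M' a b := by
    ext a b
    rw [hL₀, hM']
    simp only [Matrix.of_apply, Matrix.submatrix_apply]
    rw [hrow_mat]
  have hdet_eq : L₀.det = (∏ a : Fin k, sgn ((τ a).1)) * M'.det := by
    rw [hL₀M', Matrix.det_mul_column]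
  have habs : |L₀.det| = |M'.det| := by
    rw [hdet_eq, abs_mul, Finset.abs_prod]
    have : ∀ a : Fin k, |sgn ((τ a).1)| = 1 := by
      intro a
      rcases hsgn ((τ a).1) with hs | hs <;> rw [hs] <;> norm_num
    rw [Finset.prod_congr rfl (fun a _ => this a), Finset.prod_const_one, one_mul]
  set q : ℤ := |L₀.det| with hq
  have hq1 : 1 ≤ q := Int.one_le_abs (by exact hdetL₀)
  have hρτinj : Function.Injective (fun a => ρ (τ a).1) := by
    intro a a' haa
    apply hτinj
    apply Subtype.ext
    exact hρinj _ _ (τ a).2 (τ a').2 haa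
  have hqΔ : (q : ℝ) ≤ Δ := by
    rw [habs]
    have : ((|M'.det| : ℤ) : ℝ) = |((M'.det : ℤ) : ℝ)| := by
      rw [Int.cast_abs]
    rw [this,
      show ((M'.det : ℤ) : ℝ) = (Int.castRingHom ℝ) M'.det from rfl, RingHom.map_det]
    have hmap : (Int.castRingHom ℝ).mapMatrix M' =
        (St.map ((↑) : ℤ → ℝ)).submatrix (fun a => ρ (τ a).1) κmap := by
      rw [hM']
      ext a b
      simp [Matrix.submatrix_map]
    rw [hmap]
    exact hΔ k _ _ hρτinj hκmap_inj
  -- the linear system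
  set zK : Fin k → ℝ := fun b => z (κmap b) with hzKdef
  set bb : Fin k → ℝ := fun a => ((b₀ (Sum.inl (τ a).1) : ℤ) : ℝ) with hbb
  have hsys : L.mulVec zK = bb := by
    funext a
    have h1 : L.mulVec zK a = castv (r₀ (Sum.inl (τ a).1)) ⬝ᵥ z := by
      rw [hdot_support (r₀ (Sum.inl (τ a).1)) z hzK]
      simp [Matrix.mulVec, dotProduct, hL, hg, hzKdef, castv]
    rw [h1, (τ a).2]
  have hLunit : IsUnit L := (Matrix.isUnit_iff_isUnit_det L).2 (isUnit_iff_ne_zero.2 hτdet)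
  have hinj : Function.Injective L.mulVec := Matrix.mulVec_injective_iff_isUnit.2 hLunit
  have hcram : L.det • zK = Matrix.cramer L bb := by
    apply hinj
    rw [Matrix.mulVec_smul, hsys, Matrix.mulVec_cramer]
  set bb₀ : Fin k → ℤ := fun a => b₀ (Sum.inl (τ a).1) with hbb₀
  set cr₀ : Fin k → ℤ := Matrix.cramer L₀ bb₀ with hcr₀
  have hcrmap : ∀ i, Matrix.cramer L bb i = ((cr₀ i : ℤ) : ℝ) := by
    intro i
    rw [hcr₀, Matrix.cramer_apply, Matrix.cramer_apply]
    have hupd : L.updateCol i bb =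
        ((L₀.updateCol i bb₀).map ((↑) : ℤ → ℝ)) := by
      rw [hLmap, Matrix.map_updateCol]
      congr 1
    rw [hupd,
      show (L₀.updateCol i bb₀).map ((↑) : ℤ → ℝ) =
        (Int.castRingHom ℝ).mapMatrix (L₀.updateCol i bb₀) from rfl,
      ← RingHom.map_det]
    rfl
  have hdetcast : ((L₀.det : ℤ) : ℝ) ≠ 0 := by
    simpa using hdetL₀
  have hzKa : ∀ a, zK a = (cr₀ a : ℝ) / ((L₀.det : ℤ) : ℝ) := by
    intro a
    have hca := congrFun hcram a
    rw [Pi.smul_apply, smul_eq_mul, hcrmap a, hdetL] at hca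
    rw [eq_div_iff hdetcast, mul_comm]
    exact hca
  set N : ℤ := ∑ a : Fin k, e (κmap a) * cr₀ a with hN
  have key : castv e ⬝ᵥ z = (N : ℝ) / ((L₀.det : ℤ) : ℝ) := by
    rw [hdot_support e z hzK]
    rw [Finset.sum_congr rfl (fun a _ => by rw [show z (κmap a) = zK a from rfl, hzKa a])]
    have : ∀ a : Fin k, (e (κmap a) : ℝ) * ((cr₀ a : ℝ) / ((L₀.det : ℤ) : ℝ)) =
        ((e (κmap a) : ℝ) * (cr₀ a : ℝ)) / ((L₀.det : ℤ) : ℝ) := fun a => by ring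
    rw [Finset.sum_congr rfl (fun a _ => this a), ← Finset.sum_div]
    congr 1
    rw [hN]
    push_cast
    rfl
  rcases lt_or_gt_of_ne hdetL₀ with hneg | hpos
  · refine ⟨-N, q, hq1, hqΔ, ?_⟩
    rw [key, show q = -L₀.det from by rw [hq, abs_of_neg hneg]]
    push_cast
    rw [neg_div_neg_eq]
  · refine ⟨N, q, hq1, hqΔ, ?_⟩
    rw [key, show q = L₀.det from by rw [hq, abs_of_pos hpos]]

lemma pick_t (Dif ε : ℝ) (h0 : 0 ≤ Dif) (hε : 0 < ε) :
    ∃ t : ℝ, 0 < t ∧ t ≤ 1 ∧ t * Dif < ε := by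
  refine ⟨min 1 (ε / (2 * (Dif + 1))), lt_min one_pos (div_pos hε (by linarith)),
    min_le_left _ _, ?_⟩
  have h3 : min 1 (ε / (2 * (Dif + 1))) ≤ ε / (2 * (Dif + 1)) := min_le_right _ _
  have h4 : min 1 (ε / (2 * (Dif + 1))) * Dif ≤ (ε / (2 * (Dif + 1))) * Dif :=
    mul_le_mul_of_nonneg_right h3 h0
  have h5 : (ε / (2 * (Dif + 1))) * Dif < ε := by
    rw [div_mul_eq_mul_div, div_lt_iff₀ (by linarith : (0:ℝ) < 2 * (Dif + 1))]
    nlinarith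
  linarith

/-- A real vector has all integer entries. -/
def IsIntVec {n : ℕ} (x : Fin n → ℝ) : Prop := ∀ i, ∃ k : ℤ, x i = (k : ℝ)

/-- The upper-level polyhedron P. -/
def upperP {n d h : ℕ} (C : Matrix (Fin h) (Fin n) ℤ) (D : Matrix (Fin h) (Fin d) ℤ)
    (p : Fin h → ℤ) : Set ((Fin n → ℝ) × (Fin d → ℝ)) :=
  {xz | (C.map ((↑) : ℤ → ℝ)).mulVec xz.1 + (D.map ((↑) : ℤ → ℝ)).mulVec xz.2 ≤
          (fun i => (p i : ℝ)) ∧ 0 ≤ xz.2}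

/-- The bilevel feasible set F. -/
def bilevelF {n d m h : ℕ} (A : Matrix (Fin m) (Fin n) ℤ) (B : Matrix (Fin m) (Fin d) ℤ)
    (C : Matrix (Fin h) (Fin n) ℤ) (D : Matrix (Fin h) (Fin d) ℤ)
    (ψ : Fin n → ℤ) (u : Fin m → ℤ) (p : Fin h → ℤ) :
    Set ((Fin n → ℝ) × (Fin d → ℝ)) :=
  {xz | xz ∈ upperP C D p ∧ IsIntVec xz.1 ∧
    (A.map ((↑) : ℤ → ℝ)).mulVec xz.1 ≤
      (B.map ((↑) : ℤ → ℝ)).mulVec xz.2 + (fun i => (u i : ℝ)) ∧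
    ∀ x' : Fin n → ℝ, IsIntVec x' →
      (A.map ((↑) : ℤ → ℝ)).mulVec x' ≤
        (B.map ((↑) : ℤ → ℝ)).mulVec xz.2 + (fun i => (u i : ℝ)) →
      (fun i => (ψ i : ℝ)) ⬝ᵥ xz.1 ≤ (fun i => (ψ i : ℝ)) ⬝ᵥ x'}

set_option maxHeartbeats 1000000 in
/-- Proposition 1 (denominator bound): for a feasible BMILP instance, the infimum value
`v* = inf {c·x + e·z : (x,z) ∈ F}` is a rational number `a / q` whose denominator `q`
is bounded by `Δ`, where `Δ` is any real number that is at least `1` and at least the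
absolute value of the determinant of every square submatrix of the matrix obtained by
stacking `D` above `B`. -/
theorem bmilp_infimum_denominator_bound
    {n d m h : ℕ} (hn : 0 < n) (hd : 0 < d) (hm : 0 < m) (hh : 0 < h)
    (A : Matrix (Fin m) (Fin n) ℤ) (B : Matrix (Fin m) (Fin d) ℤ)
    (C : Matrix (Fin h) (Fin n) ℤ) (D : Matrix (Fin h) (Fin d) ℤ)
    (c : Fin n → ℤ) (e : Fin d → ℤ) (ψ : Fin n → ℤ) (u : Fin m → ℤ) (p : Fin h → ℤ)
    -- boundedness assumptions
    (hPbdd : Bornology.IsBounded (upperP C D p))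
    (hLowbdd : ∀ z : Fin d → ℝ, (∃ x : Fin n → ℝ, (x, z) ∈ upperP C D p) →
      Bornology.IsBounded {x : Fin n → ℝ |
        (A.map ((↑) : ℤ → ℝ)).mulVec x ≤
          (B.map ((↑) : ℤ → ℝ)).mulVec z + (fun i => (u i : ℝ))})
    -- feasibility
    (hfeas : (bilevelF A B C D ψ u p).Nonempty)
    -- Δ bounds 1 and all absolute values of determinants of square submatrices of (D; B)
    (Δ : ℝ) (hΔ1 : 1 ≤ Δ)
    (hΔ : ∀ (k : ℕ) (ρ : Fin k → (Fin h ⊕ Fin m)) (σ : Fin k → Fin d),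
      Function.Injective ρ → Function.Injective σ →
      |(((Matrix.fromRows (D.map ((↑) : ℤ → ℝ)) (B.map ((↑) : ℤ → ℝ))).submatrix ρ σ).det)| ≤ Δ)
    -- the infimum value
    (vstar : ℝ)
    (hvstar : vstar = sInf ((fun xz : (Fin n → ℝ) × (Fin d → ℝ) =>
      (fun i => (c i : ℝ)) ⬝ᵥ xz.1 + (fun i => (e i : ℝ)) ⬝ᵥ xz.2) '' bilevelF A B C D ψ u p)) :
    ∃ (a q : ℤ), 1 ≤ q ∧ (q : ℝ) ≤ Δ ∧ vstar = (a : ℝ) / (q : ℝ) := by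
  classical
  obtain ⟨R, hR⟩ := isBounded_iff_forall_norm_le.1 hPbdd
  -- row data
  set St : Matrix (Fin h ⊕ Fin m) (Fin d) ℤ := Matrix.fromRows D B with hSt
  set sg : Fin h ⊕ (Fin m ⊕ Fin m) → ℤ :=
    Sum.elim (fun _ => 1) (Sum.elim (fun _ => 1) (fun _ => -1)) with hsg
  set ρf : Fin h ⊕ (Fin m ⊕ Fin m) → Fin h ⊕ Fin m :=
    Sum.elim Sum.inl (Sum.elim Sum.inr Sum.inr) with hρf
  set r0 : (Fin h ⊕ (Fin m ⊕ Fin m)) ⊕ Fin d → Fin d → ℤ :=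
    Sum.elim (Sum.elim (fun i => D i) (Sum.elim (fun i => B i) (fun i => -(B i))))
      (fun j => -(Pi.single j 1)) with hr0
  set b0 : (Fin n → ℤ) → (Fin m → ℤ) → ((Fin h ⊕ (Fin m ⊕ Fin m)) ⊕ Fin d) → ℤ :=
    fun ξ w => Sum.elim (Sum.elim (fun i => (p - C.mulVec ξ) i)
      (Sum.elim (fun i => w i + 1 - u i) (fun i => u i - w i))) (fun _ => 0) with hb0
  set Srel : (Fin n → ℤ) → (Fin m → ℤ) → Set (Fin d → ℝ) :=
    fun ξ w => {z | ∀ i, castv (r0 i) ⬝ᵥ z ≤ ((b0 ξ w i : ℤ) : ℝ)} with hSrel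
  set Sstr : (Fin n → ℤ) → (Fin m → ℤ) → Set (Fin d → ℝ) :=
    fun ξ w => {z | z ∈ Srel ξ w ∧
      ∀ i : Fin m, castv (B i) ⬝ᵥ z < ((w i + 1 - u i : ℤ) : ℝ)} with hSstr
  set Ψp : (Fin n → ℤ) → (Fin m → ℤ) → Prop :=
    fun ξ w => ∀ ξ' : Fin n → ℤ, A.mulVec ξ' ≤ w → ψ ⬝ᵥ ξ ≤ ψ ⬝ᵥ ξ' with hΨp
  set floorw : (Fin d → ℝ) → (Fin m → ℤ) :=
    fun z i => ⌊((B.map ((↑) : ℤ → ℝ)).mulVec z + castv u) i⌋ with hfloorw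
  -- membership in P from the relaxed system
  have hmemP : ∀ (ξ : Fin n → ℤ) (w : Fin m → ℤ) (z : Fin d → ℝ),
      z ∈ Srel ξ w → (castv ξ, z) ∈ upperP C D p := by
    intro ξ w z hz
    constructor
    · rw [Pi.le_def]
      intro i
      have h1 := hz (Sum.inl (Sum.inl i))
      simp only [hr0, hb0, Sum.elim_inl] at h1
      have h2 : ((C.map ((↑) : ℤ → ℝ)).mulVec (castv ξ)) i = ((C.mulVec ξ i : ℤ) : ℝ) := by
        rw [map_mulVec_castv]; rfl
      show ((C.map ((↑) : ℤ → ℝ)).mulVec (castv ξ)) i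
          + ((D.map ((↑) : ℤ → ℝ)).mulVec z) i ≤ (p i : ℝ)
      rw [h2, row_dot]
      have h3 : ((p - C.mulVec ξ) i : ℝ) = (p i : ℝ) - ((C.mulVec ξ) i : ℝ) := by
        push_cast [Pi.sub_apply]
        ring
      rw [h3] at h1
      linarith
    · rw [Pi.le_def]
      intro j
      have h1 := hz (Sum.inr j)
      simp only [hr0, hb0, Sum.elim_inr] at h1
      rw [castv_single_dot] at h1
      simp only [Pi.zero_apply]
      push_cast at h1
      linarith
  have hSrel_bdd : ∀ ξ w, Bornology.IsBounded (Srel ξ w) := by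
    intro ξ w
    rw [isBounded_iff_forall_norm_le]
    refine ⟨R, fun z hz => ?_⟩
    exact le_trans (norm_snd_le (castv ξ, z)) (hR _ (hmemP ξ w z hz))
  -- from points of F to pieces
  have hto : ∀ x z, (x, z) ∈ bilevelF A B C D ψ u p → ∀ ξ : Fin n → ℤ, x = castv ξ →
      z ∈ Sstr ξ (floorw z) ∧ A.mulVec ξ ≤ floorw z ∧ Ψp ξ (floorw z) := by
    intro x z hF ξ hξ
    obtain ⟨⟨hP1, hP2⟩, hint, hAx, hopt⟩ := hF
    have hfl1 : ∀ i, (floorw z i : ℝ) ≤ ((B.map ((↑) : ℤ → ℝ)).mulVec z + castv u) i :=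
      fun i => Int.floor_le _
    have hfl2 : ∀ i, ((B.map ((↑) : ℤ → ℝ)).mulVec z + castv u) i < floorw z i + 1 :=
      fun i => Int.lt_floor_add_one _
    have hBu : ∀ i, ((B.map ((↑) : ℤ → ℝ)).mulVec z + castv u) i =
        castv (B i) ⬝ᵥ z + (u i : ℝ) := fun i => rfl
    refine ⟨⟨?_, ?_⟩, ?_, ?_⟩
    · intro i
      rcases i with (i | (i | i)) | j
      · simp only [hr0, hb0, Sum.elim_inl]
        have h1 := hP1 i
        simp only [Pi.add_apply] at h1
        have h2 : ((C.map ((↑) : ℤ → ℝ)).mulVec x) i = ((C.mulVec ξ i : ℤ) : ℝ) := by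
          rw [hξ, map_mulVec_castv]; rfl
        rw [h2, row_dot] at h1
        have h3 : ((p - C.mulVec ξ) i : ℝ) = (p i : ℝ) - ((C.mulVec ξ) i : ℝ) := by
          push_cast [Pi.sub_apply]; ring
        rw [h3]
        linarith
      · simp only [hr0, hb0, Sum.elim_inl, Sum.elim_inr]
        have h1 := hfl2 i
        rw [hBu i] at h1
        push_cast
        linarith
      · simp only [hr0, hb0, Sum.elim_inl, Sum.elim_inr]
        rw [castv_neg_dot]
        have h1 := hfl1 i
        rw [hBu i] at h1
        push_cast
        linarith
      · simp only [hr0, hb0, Sum.elim_inr]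
        rw [castv_single_dot]
        have h1 := hP2 j
        simp only [Pi.zero_apply] at h1
        push_cast
        linarith
    · intro i
      have h1 := hfl2 i
      rw [hBu i] at h1
      push_cast
      linarith
    · intro i
      have h1 := hAx i
      simp only [Pi.add_apply] at h1
      have h2 : ((A.map ((↑) : ℤ → ℝ)).mulVec x) i = ((A.mulVec ξ i : ℤ) : ℝ) := by
        rw [hξ, map_mulVec_castv]; rfl
      rw [h2] at h1
      apply Int.le_floor.2
      show ((A.mulVec ξ i : ℤ) : ℝ) ≤ ((B.map ((↑) : ℤ → ℝ)).mulVec z + castv u) i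
      rw [hBu i]
      rw [row_dot] at h1
      exact h1
    · intro ξ' hle
      have hx' : IsIntVec (castv ξ') := fun i => ⟨ξ' i, rfl⟩
      have hAx' : (A.map ((↑) : ℤ → ℝ)).mulVec (castv ξ') ≤
          (B.map ((↑) : ℤ → ℝ)).mulVec z + (fun i => (u i : ℝ)) := by
        rw [map_mulVec_castv, Pi.le_def]
        intro i
        have h1 : ((A.mulVec ξ') i : ℝ) ≤ (floorw z i : ℝ) := by
          exact_mod_cast hle i
        have h2 := hfl1 i
        exact le_trans h1 h2
      have := hopt (castv ξ') hx' hAx'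
      rw [hξ] at this
      have h1 : (fun i => (ψ i : ℝ)) = castv ψ := rfl
      rw [h1, castv_dot_castv, castv_dot_castv] at this
      exact_mod_cast this
  -- from pieces to F
  have hfrom : ∀ (ξ : Fin n → ℤ) (w : Fin m → ℤ) (z : Fin d → ℝ), z ∈ Sstr ξ w →
      A.mulVec ξ ≤ w → Ψp ξ w → (castv ξ, z) ∈ bilevelF A B C D ψ u p := by
    intro ξ w z hz hAle hΨ
    have hwle : ∀ i, (w i : ℝ) ≤ castv (B i) ⬝ᵥ z + (u i : ℝ) := by
      intro i
      have h1 := hz.1 (Sum.inl (Sum.inr (Sum.inr i)))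
      simp only [hr0, hb0, Sum.elim_inl, Sum.elim_inr] at h1
      rw [castv_neg_dot] at h1
      push_cast at h1
      linarith
    have hwlt : ∀ i, castv (B i) ⬝ᵥ z + (u i : ℝ) < (w i : ℝ) + 1 := by
      intro i
      have h1 := hz.2 i
      push_cast at h1
      linarith
    refine ⟨hmemP ξ w z hz.1, fun i => ⟨ξ i, rfl⟩, ?_, ?_⟩
    · rw [map_mulVec_castv, Pi.le_def]
      intro i
      have h1 : ((A.mulVec ξ) i : ℝ) ≤ (w i : ℝ) := by exact_mod_cast hAle i
      have h2 := hwle i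
      show ((A.mulVec ξ) i : ℝ) ≤ ((B.map ((↑) : ℤ → ℝ)).mulVec z) i + (u i : ℝ)
      rw [row_dot]
      linarith
    · intro x' hx' hle
      obtain ⟨ξ', hξ'⟩ : ∃ ξ'' : Fin n → ℤ, x' = castv ξ'' :=
        ⟨fun i => (hx' i).choose, funext fun i => (hx' i).choose_spec⟩
      have hAξ' : A.mulVec ξ' ≤ w := by
        intro i
        have h1 := hle i
        rw [hξ', map_mulVec_castv] at h1
        simp only [Pi.add_apply] at h1
        rw [row_dot] at h1
        have h2 := hwlt i
        have h3 : ((A.mulVec ξ') i : ℝ) < (w i : ℝ) + 1 := by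
          calc ((A.mulVec ξ') i : ℝ) ≤ castv (B i) ⬝ᵥ z + (u i : ℝ) := h1
            _ < (w i : ℝ) + 1 := h2
        have h4 : ((A.mulVec ξ') i : ℝ) < ((w i + 1 : ℤ) : ℝ) := by push_cast; linarith
        have h5 : (A.mulVec ξ') i < w i + 1 := by exact_mod_cast h4
        exact Int.lt_add_one_iff.mp h5
      have := hΨ ξ' hAξ'
      show (fun i => (ψ i : ℝ)) ⬝ᵥ castv ξ ≤ (fun i => (ψ i : ℝ)) ⬝ᵥ x'
      rw [hξ']
      have h1 : (fun i => (ψ i : ℝ)) = castv ψ := rfl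
      rw [h1, castv_dot_castv, castv_dot_castv]
      exact_mod_cast this
  -- integer bounds
  set Rx : ℤ := ⌈R⌉ with hRx
  set Rw : ℤ := ⌈((∑ i, ∑ j, |B i j| : ℤ) : ℝ) * R + ((∑ i, |u i| : ℤ) : ℝ)⌉ + 1 with hRw
  set G : Set ((Fin n → ℤ) × (Fin m → ℤ)) := {ξw |
    (∀ i, |ξw.1 i| ≤ Rx) ∧ (∀ i, |ξw.2 i| ≤ Rw) ∧ A.mulVec ξw.1 ≤ ξw.2 ∧
    Ψp ξw.1 ξw.2 ∧ (Sstr ξw.1 ξw.2).Nonempty} with hG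
  have hGfin : G.Finite := by
    apply Set.Finite.subset (Set.finite_Icc
      (((fun _ => -Rx, fun _ => -Rw)) : (Fin n → ℤ) × (Fin m → ℤ))
      ((fun _ => Rx, fun _ => Rw)))
    rintro ⟨ξ, w⟩ ⟨h1, h2, -, -, -⟩
    rw [Set.mem_Icc]
    refine ⟨⟨fun i => ?_, fun i => ?_⟩, ⟨fun i => ?_, fun i => ?_⟩⟩
    · have := h1 i; have := abs_le.1 (h1 i); exact this.1
    · have := abs_le.1 (h2 i); exact this.1
    · exact (abs_le.1 (h1 i)).2
    · exact (abs_le.1 (h2 i)).2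
  have hbound : ∀ x z, (x, z) ∈ bilevelF A B C D ψ u p → ∀ ξ : Fin n → ℤ, x = castv ξ →
      (∀ i, |ξ i| ≤ Rx) ∧ (∀ i, |floorw z i| ≤ Rw) := by
    intro x z hF ξ hξ
    have hP := hF.1
    have hnorm := hR _ hP
    have hR0 : 0 ≤ R := le_trans (norm_nonneg _) hnorm
    have hxz : ∀ j, |z j| ≤ R := by
      intro j
      calc |z j| = ‖z j‖ := rfl
        _ ≤ ‖z‖ := norm_le_pi_norm z j
        _ ≤ ‖((x : Fin n → ℝ), z)‖ := norm_snd_le (x, z)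
        _ ≤ R := hnorm
    constructor
    · intro i
      have h1 : |x i| ≤ R := by
        calc |x i| = ‖x i‖ := rfl
          _ ≤ ‖x‖ := norm_le_pi_norm x i
          _ ≤ ‖((x : Fin n → ℝ), z)‖ := norm_fst_le (x, z)
          _ ≤ R := hnorm
      have h2 : ((|ξ i| : ℤ) : ℝ) ≤ (Rx : ℝ) := by
        rw [Int.cast_abs]
        have h3 : ((ξ i : ℤ) : ℝ) = x i := by rw [hξ]; rfl
        rw [h3]
        exact le_trans h1 (le_trans (Int.le_ceil R) (by rw [hRx]))
      exact_mod_cast h2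
    · intro i
      set MB : ℤ := ∑ i, ∑ j, |B i j| with hMB
      set MU : ℤ := ∑ i, |u i| with hMU
      have hMBnn : ∀ i' : Fin m, (0:ℝ) ≤ ∑ j, |(B i' j : ℝ)| :=
        fun i' => Finset.sum_nonneg fun j _ => abs_nonneg _
      have hBrow : |((B.map ((↑) : ℤ → ℝ)).mulVec z) i| ≤ (MB : ℝ) * R := by
        rw [row_dot]
        have h1 : |castv (B i) ⬝ᵥ z| ≤ ∑ j, |(B i j : ℝ)| * R := by
          rw [dotProduct]
          refine le_trans (Finset.abs_sum_le_sum_abs _ _) ?_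
          refine Finset.sum_le_sum fun j _ => ?_
          rw [abs_mul]
          exact mul_le_mul_of_nonneg_left (hxz j) (abs_nonneg _)
        refine le_trans h1 ?_
        rw [← Finset.sum_mul]
        apply mul_le_mul_of_nonneg_right _ hR0
        have h2 : (∑ j, |(B i j : ℝ)|) = ((∑ j, |B i j| : ℤ) : ℝ) := by
          push_cast
          rfl
        rw [h2]
        have h3 : (∑ j, |B i j| : ℤ) ≤ MB := by
          rw [hMB]
          exact Finset.single_le_sum (f := fun i' => ∑ j, |B i' j|)
            (fun i' _ => Finset.sum_nonneg fun j _ => abs_nonneg _) (Finset.mem_univ i)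
        exact_mod_cast h3
      have hu : |(u i : ℝ)| ≤ (MU : ℝ) := by
        have h3 : |u i| ≤ MU := Finset.single_le_sum (f := fun i' => |u i'|)
          (fun i' _ => abs_nonneg _) (Finset.mem_univ i)
        rw [← Int.cast_abs]
        exact_mod_cast h3
      set v : ℝ := ((B.map ((↑) : ℤ → ℝ)).mulVec z + castv u) i with hv
      have hvabs : |v| ≤ (MB : ℝ) * R + (MU : ℝ) := by
        rw [hv]
        simp only [Pi.add_apply]
        refine le_trans (abs_add_le _ _) ?_
        exact add_le_add hBrow hu
      have hfl : |((floorw z i : ℤ) : ℝ)| ≤ |v| + 1 := by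
        rw [abs_le]
        have h1 : ((floorw z i : ℤ) : ℝ) ≤ v := Int.floor_le v
        have h2 : v - 1 < ((floorw z i : ℤ) : ℝ) := by
          have := Int.lt_floor_add_one v
          linarith
        constructor
        · have := neg_abs_le v; linarith
        · have := le_abs_self v; linarith
      have hfin : |((floorw z i : ℤ) : ℝ)| ≤ (Rw : ℝ) := by
        rw [hRw]
        push_cast
        have := Int.le_ceil ((MB : ℝ) * R + (MU : ℝ))
        linarith
      exact_mod_cast hfin
  -- the value of each piece
  have hval : ∀ g : (Fin n → ℤ) × (Fin m → ℤ), ∃ val : ℝ, g ∈ G →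
      ((∃ a q : ℤ, 1 ≤ q ∧ (q : ℝ) ≤ Δ ∧ val = ((a : ℝ) / (q : ℝ))) ∧
       (∀ z ∈ Srel g.1 g.2, val ≤ ((c ⬝ᵥ g.1 : ℤ) : ℝ) + castv e ⬝ᵥ z) ∧
       (∀ ε : ℝ, 0 < ε → ∃ z ∈ Sstr g.1 g.2,
         ((c ⬝ᵥ g.1 : ℤ) : ℝ) + castv e ⬝ᵥ z < val + ε)) := by
    intro g
    by_cases hgG : g ∈ G
    swap
    · exact ⟨0, fun hcon => absurd hcon hgG⟩
    obtain ⟨ξ, w⟩ := g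
    obtain ⟨-, -, -, -, ⟨z₀, hz₀⟩⟩ := hgG
    have hSne : (Srel ξ w).Nonempty := ⟨z₀, hz₀.1⟩
    obtain ⟨zs, hzs_mem, hzs_min, hzs_tight⟩ := lp_basic (fun i => castv (r0 i))
      (fun i => ((b0 ξ w i : ℤ) : ℝ)) (castv e) hSne (hSrel_bdd ξ w)
    -- rationality of the minimum
    have hrow_mat : ∀ t, r0 (Sum.inl t) = fun j => sg t * St (ρf t) j := by
      rintro (i | (i | i)) <;> funext j <;>
        simp [hr0, hsg, hρf, hSt, Matrix.fromRows] <;> rfl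
    have hrow_unit : ∀ j : Fin d, r0 (Sum.inr j) = -(Pi.single j 1) := fun j => rfl
    have hb_unit : ∀ j, b0 ξ w (Sum.inr j) = 0 := fun j => rfl
    have hsgn : ∀ t, sg t = 1 ∨ sg t = -1 := by
      rintro (i | (i | i)) <;> simp [hsg]
    have hρinj : ∀ t t', castv (r0 (Sum.inl t)) ⬝ᵥ zs = (b0 ξ w (Sum.inl t) : ℝ) →
        castv (r0 (Sum.inl t')) ⬝ᵥ zs = (b0 ξ w (Sum.inl t') : ℝ) →
        ρf t = ρf t' → t = t' := by
      rintro (i | (i | i)) (i' | (i' | i')) h1 h2 heq <;>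
        simp only [hρf, Sum.elim_inl, Sum.elim_inr] at heq
      · rw [Sum.inl.injEq] at heq; rw [heq]
      · exact absurd heq (by simp)
      · exact absurd heq (by simp)
      · exact absurd heq (by simp)
      · rw [Sum.inr.injEq] at heq; rw [heq]
      · -- B row and -B row both tight: contradiction
        rw [Sum.inr.injEq] at heq
        subst heq
        exfalso
        simp only [hr0, hb0, Sum.elim_inl, Sum.elim_inr] at h1 h2
        rw [castv_neg_dot] at h2
        push_cast at h1 h2
        linarith
      · exact absurd heq (by simp)
      · rw [Sum.inr.injEq] at heq
        subst heq
        exfalso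
        simp only [hr0, hb0, Sum.elim_inl, Sum.elim_inr] at h1 h2
        rw [castv_neg_dot] at h1
        push_cast at h1 h2
        linarith
      · rw [Sum.inr.injEq] at heq; rw [heq]
    have hΔ' : ∀ (k : ℕ) (ρ' : Fin k → Fin h ⊕ Fin m) (σ : Fin k → Fin d),
        Function.Injective ρ' → Function.Injective σ →
        |(((St.map ((↑) : ℤ → ℝ)).submatrix ρ' σ).det)| ≤ Δ := by
      intro k ρ' σ hρ'inj hσinj
      have hmap : St.map ((↑) : ℤ → ℝ) =
          Matrix.fromRows (D.map ((↑) : ℤ → ℝ)) (B.map ((↑) : ℤ → ℝ)) := by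
        rw [hSt]
        ext i j
        rcases i with i | i <;> rfl
      rw [hmap]
      exact hΔ k ρ' σ hρ'inj hσinj
    obtain ⟨a, q, hq1, hqΔ, hzs_val⟩ := value_rational St sg hsgn ρf r0 (b0 ξ w)
      hrow_mat hrow_unit hb_unit e zs hzs_tight hρinj Δ hΔ'
    set val : ℝ := ((c ⬝ᵥ ξ : ℤ) : ℝ) + castv e ⬝ᵥ zs with hvaldef
    refine ⟨val, fun _ => ⟨⟨c ⬝ᵥ ξ * q + a, q, hq1, hqΔ, ?_⟩, ?_, ?_⟩⟩
    · have hqne : ((q : ℤ) : ℝ) ≠ 0 := by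
        have : (0:ℝ) < ((q : ℤ) : ℝ) := by exact_mod_cast hq1
        linarith
      rw [hvaldef, hzs_val]
      push_cast
      field_simp
    · intro z hz
      rw [hvaldef]
      have := hzs_min z hz
      linarith
    · intro ε hε
      have hDif0 : 0 ≤ castv e ⬝ᵥ z₀ - castv e ⬝ᵥ zs := by
        have := hzs_min z₀ hz₀.1
        linarith
      obtain ⟨t, ht0, ht1, htd⟩ := pick_t _ ε hDif0 hε
      set zt : Fin d → ℝ := zs + t • (z₀ - zs) with hzt
      have hdotzt : ∀ v : Fin d → ℤ, castv v ⬝ᵥ zt =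
          (1 - t) * (castv v ⬝ᵥ zs) + t * (castv v ⬝ᵥ z₀) := by
        intro v
        rw [hzt, dotProduct_add, dotProduct_smul, smul_eq_mul, dotProduct_sub]
        ring
      have hztSstr : zt ∈ Sstr ξ w := by
        constructor
        · intro i
          rw [hdotzt]
          have h1 := hzs_mem i
          have h2 := hz₀.1 i
          nlinarith
        · intro i
          rw [hdotzt]
          have h1 := hzs_mem (Sum.inl (Sum.inr (Sum.inl i)))
          simp only [hr0, hb0, Sum.elim_inl, Sum.elim_inr] at h1
          have h2 := hz₀.2 i
          nlinarith
      refine ⟨zt, hztSstr, ?_⟩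
      rw [hdotzt, hvaldef]
      nlinarith [htd]
  choose valf hvalf using hval
  -- G is nonempty
  obtain ⟨⟨x₁, z₁⟩, hF₁⟩ := hfeas
  obtain ⟨ξ₁, hξ₁⟩ : ∃ ξ : Fin n → ℤ, x₁ = castv ξ := by
    have hint := hF₁.2.1
    exact ⟨fun i => (hint i).choose, funext fun i => (hint i).choose_spec⟩
  have hg₁ : (ξ₁, floorw z₁) ∈ G := by
    obtain ⟨hs, hA, hΨ⟩ := hto x₁ z₁ hF₁ ξ₁ hξ₁
    obtain ⟨hbx, hbw⟩ := hbound x₁ z₁ hF₁ ξ₁ hξ₁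
    exact ⟨hbx, hbw, hA, hΨ, ⟨z₁, hs⟩⟩
  obtain ⟨g₀, hg₀G, hg₀min⟩ := Set.exists_min_image G valf hGfin ⟨_, hg₁⟩
  obtain ⟨hrat₀, hlow₀, happx₀⟩ := hvalf g₀ hg₀G
  -- the objective values of F
  set V : Set ℝ := (fun xz : (Fin n → ℝ) × (Fin d → ℝ) =>
    (fun i => (c i : ℝ)) ⬝ᵥ xz.1 + (fun i => (e i : ℝ)) ⬝ᵥ xz.2) '' bilevelF A B C D ψ u p with hV
  have hVlow : ∀ v ∈ V, valf g₀ ≤ v := by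
    rintro v ⟨⟨x, z⟩, hF, rfl⟩
    obtain ⟨ξ, hξ⟩ : ∃ ξ : Fin n → ℤ, x = castv ξ :=
      ⟨fun i => (hF.2.1 i).choose, funext fun i => (hF.2.1 i).choose_spec⟩
    obtain ⟨hs, hA, hΨ⟩ := hto x z hF ξ hξ
    obtain ⟨hbx, hbw⟩ := hbound x z hF ξ hξ
    have hgG : (ξ, floorw z) ∈ G := ⟨hbx, hbw, hA, hΨ, ⟨z, hs⟩⟩
    obtain ⟨-, hlow, -⟩ := hvalf _ hgG
    have h1 := hlow z hs.1
    have h2 : (fun i => (c i : ℝ)) ⬝ᵥ x = ((c ⬝ᵥ ξ : ℤ) : ℝ) := by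
      rw [hξ, show (fun i => (c i : ℝ)) = castv c from rfl, castv_dot_castv]
    have h3 : (fun i => (e i : ℝ)) ⬝ᵥ z = castv e ⬝ᵥ z := rfl
    calc valf g₀ ≤ valf (ξ, floorw z) := hg₀min _ hgG
      _ ≤ ((c ⬝ᵥ ξ : ℤ) : ℝ) + castv e ⬝ᵥ z := h1
      _ = (fun i => (c i : ℝ)) ⬝ᵥ x + (fun i => (e i : ℝ)) ⬝ᵥ z := by rw [h2, h3]
  have hVne : V.Nonempty := ⟨_, ⟨(x₁, z₁), hF₁, rfl⟩⟩
  have h1 : valf g₀ ≤ vstar := by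
    rw [hvstar]
    exact le_csInf hVne hVlow
  have h2 : vstar ≤ valf g₀ := by
    by_contra hcon
    push_neg at hcon
    obtain ⟨z, hz, hlt⟩ := happx₀ (vstar - valf g₀) (by linarith)
    have hF := hfrom g₀.1 g₀.2 z hz hg₀G.2.2.1 hg₀G.2.2.2.1
    have hmem : ((fun i => (c i : ℝ)) ⬝ᵥ castv g₀.1 + (fun i => (e i : ℝ)) ⬝ᵥ z) ∈ V :=
      ⟨(castv g₀.1, z), hF, rfl⟩
    have hge : vstar ≤ (fun i => (c i : ℝ)) ⬝ᵥ castv g₀.1 + (fun i => (e i : ℝ)) ⬝ᵥ z := by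
      rw [hvstar]
      exact csInf_le ⟨valf g₀, hVlow⟩ hmem
    have heq : (fun i => (c i : ℝ)) ⬝ᵥ castv g₀.1 = ((c ⬝ᵥ g₀.1 : ℤ) : ℝ) := by
      rw [show (fun i => (c i : ℝ)) = castv c from rfl, castv_dot_castv]
    have heq2 : (fun i => (e i : ℝ)) ⬝ᵥ z = castv e ⬝ᵥ z := rfl
    rw [heq, heq2] at hge
    linarith
  obtain ⟨a, q, hq1, hqΔ, hval₀⟩ := hrat₀
  exact ⟨a, q, hq1, hqΔ, by rw [le_antisymm h2 h1, hval₀]⟩
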